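/- Let ℋ₁ and ℋ₂ be complex Hilbert spaces, with anti-dual spaces (conj ℋ_j)' (the spaces of continuous anti-linear functionals on ℋ_j) and Riesz isometric isomorphisms E_j : (conj ℋ_j)' → ℋ_j determined by ⟨f, u⟩ = (E_j f, u)_{ℋ_j} for all u ∈ ℋ_j. Suppose Y : ℋ₁ → ℋ₂ and Z : (conj ℋ₂)' → (conj ℋ₁)' are densely defined operators forming a formally adjoint pair, i.e. ⟨f, Yu⟩ = ⟨Zf, u⟩ for all u ∈ dom(Y) and f ∈ dom(Z). Let 𝒯 be the operator on ℋ₁ ⊕ ℋ₂ with domain dom(Y) ⊕ E₂(dom(Z)) given by 𝒯(u₁, u₂) = (E₁ Z E₂⁻¹ u₂, Y u₁). Then the following are equivalent: (i) Y and Z form an essentially adjoint pair, i.e. the closure of Y equals the true adjoint Z' of Z and the closure of Z equals the true adjoint Y' of Y; (ii) 𝒯 is essentially self-adjoint on dom(Y) ⊕ E₂(dom(Z)). -/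

import Mathlib

open scoped InnerProductSpace
open scoped LinearPMap

section Aux

theorem LinearPMap.isClosable_of_forall_zero {R E F : Type*} [CommRing R] [AddCommGroup E]
    [AddCommGroup F] [Module R E] [Module R F] [TopologicalSpace E] [TopologicalSpace F]
    [ContinuousAdd E] [ContinuousAdd F] [TopologicalSpace R] [ContinuousSMul R E]
    [ContinuousSMul R F] (f : E →ₗ.[R] F)
    (h : ∀ x ∈ f.graph.topologicalClosure, x.1 = 0 → x.2 = 0) : f.IsClosable :=
  ⟨f.graph.topologicalClosure.toLinearPMap, (Submodule.toLinearPMap_graph_eq _ h).symm⟩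

theorem Dense.image_homeomorph {X Y : Type*} [TopologicalSpace X] [TopologicalSpace Y]
    (h : X ≃ₜ Y) {s : Set X} (hs : Dense s) : Dense (⇑h '' s) := by
  rw [dense_iff_closure_eq] at *
  rw [← h.image_closure, hs, Set.image_univ, h.surjective.range_eq]

variable {K₁ K₂ : Type*}
  [NormedAddCommGroup K₁] [InnerProductSpace ℂ K₁]
  [NormedAddCommGroup K₂] [InnerProductSpace ℂ K₂]

/-- The "adjoint pairing" set of a set of pairs. -/
def adjPairs (G : Set (K₁ × K₂)) : Set (K₂ × K₁) :=
  {p | ∀ q ∈ G, ⟪p.2, q.1⟫_ℂ = ⟪p.1, q.2⟫_ℂ}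

theorem mem_adjPairs_iff {G : Set (K₁ × K₂)} {p : K₂ × K₁} :
    p ∈ adjPairs G ↔ ∀ q ∈ G, ⟪p.2, q.1⟫_ℂ = ⟪p.1, q.2⟫_ℂ := Iff.rfl

theorem isClosed_adjPairs (G : Set (K₁ × K₂)) : IsClosed (adjPairs G) := by
  have : adjPairs G = ⋂ q ∈ G, {p : K₂ × K₁ | ⟪p.2, q.1⟫_ℂ = ⟪p.1, q.2⟫_ℂ} := by
    ext p; simp [adjPairs]
  rw [this]
  exact isClosed_biInter fun q _ => isClosed_eq
    (continuous_snd.inner continuous_const) (continuous_fst.inner continuous_const)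

theorem adjPairs_closure (G : Set (K₁ × K₂)) : adjPairs (closure G) = adjPairs G := by
  apply Set.Subset.antisymm
  · exact fun p hp q hq => hp q (subset_closure hq)
  · intro p hp q hq
    refine closure_minimal (s := G) (t := {q : K₁ × K₂ | ⟪p.2, q.1⟫_ℂ = ⟪p.1, q.2⟫_ℂ}) hp
      (isClosed_eq (continuous_const.inner continuous_fst)
        (continuous_const.inner continuous_snd)) hq

theorem zero_mem_adjPairs (G : Set (K₁ × K₂)) : (0 : K₂ × K₁) ∈ adjPairs G := by
  intro q _; simp

theorem graph_adjoint_eq [CompleteSpace K₁] {T : K₁ →ₗ.[ℂ] K₂}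
    (hT : Dense (T.domain : Set K₁)) :
    (T†.graph : Set (K₂ × K₁)) = adjPairs (T.graph : Set (K₁ × K₂)) := by
  ext ⟨v, w⟩
  constructor
  · intro hvw
    rw [SetLike.mem_coe, LinearPMap.mem_graph_iff] at hvw
    obtain ⟨y, hy1, hy2⟩ := hvw
    rintro ⟨a, b⟩ hab
    rw [SetLike.mem_coe, LinearPMap.mem_graph_iff] at hab
    obtain ⟨x, hx1, hx2⟩ := hab
    simp only at hx1 hx2 hy1 hy2 ⊢
    rw [← hx1, ← hx2, ← hy1, ← hy2]
    exact LinearPMap.adjoint_isFormalAdjoint hT y x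
  · intro hp
    have hv : v ∈ T†.domain := by
      refine LinearPMap.mem_adjoint_domain_of_exists _ ⟨w, fun x => ?_⟩
      exact hp (↑x, T x) (T.mem_graph x)
    rw [SetLike.mem_coe, LinearPMap.mem_graph_iff]
    refine ⟨⟨v, hv⟩, rfl, ?_⟩
    exact LinearPMap.adjoint_apply_eq hT ⟨v, hv⟩ fun x => hp (↑x, T x) (T.mem_graph x)

end Aux

set_option maxHeartbeats 2000000

/-- Abstract criterion for essentially adjoint pairs: let `Y : ℋ₁ → ℋ₂` and
`Z : (conj ℋ₂)' → (conj ℋ₁)'` (where the anti-dual `(conj ℋ)'` is realized as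
the space `ℋ →L⋆[ℂ] ℂ` of continuous anti-linear functionals) be densely defined
operators forming a formally adjoint pair `⟨f, Yu⟩ = ⟨Zf, u⟩`, and let
`E_j : (conj ℋ_j)' ≃ ℋ_j` be the Riesz isometric isomorphisms, determined by
`⟨f, u⟩ = (E_j f, u)`.  Then `Y` and `Z` form an essentially adjoint pair
(the closure of each one is the true adjoint of the other, expressed here through
graphs) if and only if the operator `𝒯(u₁, u₂) = (E₁ Z E₂⁻¹ u₂, Y u₁)` with domain
`dom(Y) ⊕ E₂(dom Z)` is essentially self-adjoint on `ℋ₁ ⊕ ℋ₂`. -/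
theorem essentially_adjoint_pair_iff_block_selfadjoint {H₁ H₂ : Type*}
    [NormedAddCommGroup H₁] [InnerProductSpace ℂ H₁] [CompleteSpace H₁]
    [NormedAddCommGroup H₂] [InnerProductSpace ℂ H₂] [CompleteSpace H₂]
    (E₁ : (H₁ →L⋆[ℂ] ℂ) ≃ₗᵢ[ℂ] H₁) (E₂ : (H₂ →L⋆[ℂ] ℂ) ≃ₗᵢ[ℂ] H₂)
    (hE₁ : ∀ (f : H₁ →L⋆[ℂ] ℂ) (u : H₁), f u = ⟪u, E₁ f⟫_ℂ)
    (hE₂ : ∀ (f : H₂ →L⋆[ℂ] ℂ) (u : H₂), f u = ⟪u, E₂ f⟫_ℂ)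
    (Y : H₁ →ₗ.[ℂ] H₂) (Z : (H₂ →L⋆[ℂ] ℂ) →ₗ.[ℂ] (H₁ →L⋆[ℂ] ℂ))
    (hY : Dense (Y.domain : Set H₁))
    (hZ : Dense (Z.domain : Set (H₂ →L⋆[ℂ] ℂ)))
    (hYZ : ∀ (u : Y.domain) (f : Z.domain),
      (f : H₂ →L⋆[ℂ] ℂ) (Y u) = (Z f) (u : H₁))
    (T : WithLp 2 (H₁ × H₂) →ₗ.[ℂ] WithLp 2 (H₁ × H₂))
    (hTdom : T.domain =
      (Y.domain.prod (Z.domain.map E₂.toLinearEquiv.toLinearMap)).comap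
        (WithLp.linearEquiv 2 ℂ (H₁ × H₂)).toLinearMap)
    (hTapp : ∀ (x : T.domain)
      (h₁ : (WithLp.equiv 2 (H₁ × H₂) (x : WithLp 2 (H₁ × H₂))).1 ∈ Y.domain)
      (h₂ : E₂.symm (WithLp.equiv 2 (H₁ × H₂) (x : WithLp 2 (H₁ × H₂))).2 ∈ Z.domain),
      T x = (WithLp.equiv 2 (H₁ × H₂)).symm
        (E₁ (Z ⟨E₂.symm (WithLp.equiv 2 (H₁ × H₂) (x : WithLp 2 (H₁ × H₂))).2, h₂⟩),
         Y ⟨(WithLp.equiv 2 (H₁ × H₂) (x : WithLp 2 (H₁ × H₂))).1, h₁⟩)) :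
    ((∀ (u : H₁) (w : H₂), (u, w) ∈ Y.closure.graph ↔
        ∀ f : Z.domain, (f : H₂ →L⋆[ℂ] ℂ) w = (Z f) u) ∧
     (∀ (f : H₂ →L⋆[ℂ] ℂ) (g : H₁ →L⋆[ℂ] ℂ), (f, g) ∈ Z.closure.graph ↔
        ∀ u : Y.domain, f (Y u) = g (u : H₁))) ↔
    IsSelfAdjoint T.closure := by
  classical
  set W := WithLp 2 (H₁ × H₂) with hW
  let eW : W ≃L[ℂ] H₁ × H₂ := WithLp.prodContinuousLinearEquiv 2 ℂ H₁ H₂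
  let ε : ((H₂ →L⋆[ℂ] ℂ) × (H₁ →L⋆[ℂ] ℂ)) ≃ₜ (H₂ × H₁) :=
    E₂.toHomeomorph.prodCongr E₁.toHomeomorph
  set GY : Set (H₁ × H₂) := (Y.graph : Set (H₁ × H₂)) with hGYdef
  set GA : Set (H₂ × H₁) := ⇑ε '' (Z.graph : Set _) with hGAdef
  -- membership in GA
  have hGA : ∀ p : H₂ × H₁, p ∈ GA ↔
      ∃ f : Z.domain, E₂ ↑f = p.1 ∧ E₁ (Z f) = p.2 := by
    intro p
    constructor
    · rintro ⟨⟨f, g⟩, hfg, rfl⟩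
      rw [SetLike.mem_coe, LinearPMap.mem_graph_iff] at hfg
      obtain ⟨fd, h1, h2⟩ := hfg
      have hε : ε (f, g) = (E₂ f, E₁ g) := rfl
      rw [hε]
      simp only at h1 h2
      exact ⟨fd, by rw [h1], by rw [h2]⟩
    · rintro ⟨fd, h1, h2⟩
      refine ⟨(↑fd, Z fd), Z.mem_graph fd, ?_⟩
      have : ε (↑fd, Z fd) = (E₂ ↑fd, E₁ (Z fd)) := rfl
      rw [this, h1, h2]
  -- the shuffle homeomorphism
  let σh : ((H₁ × H₂) × (H₂ × H₁)) ≃ₜ (W × W) :=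
    { toFun := fun p => (eW.symm (p.1.1, p.2.1), eW.symm (p.2.2, p.1.2))
      invFun := fun q => (((eW q.1).1, (eW q.2).2), ((eW q.1).2, (eW q.2).1))
      left_inv := by intro p; simp
      right_inv := by intro q; simp
      continuous_toFun := by
        exact ((eW.symm.continuous.comp ((continuous_fst.fst).prodMk
          (continuous_snd.fst))).prodMk (eW.symm.continuous.comp
          ((continuous_snd.snd).prodMk (continuous_fst.snd))))
      continuous_invFun := by
        exact ((((eW.continuous.comp continuous_fst).fst).prodMk
          ((eW.continuous.comp continuous_snd).snd)).prodMk
          (((eW.continuous.comp continuous_fst).snd).prodMk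
          ((eW.continuous.comp continuous_snd).fst))) }
  -- graph of T
  have hdomT : ∀ x : W, x ∈ T.domain ↔
      ((eW x).1 ∈ Y.domain ∧ E₂.symm (eW x).2 ∈ Z.domain) := by
    intro x
    rw [hTdom, Submodule.mem_comap]
    have heq : (WithLp.linearEquiv 2 ℂ (H₁ × H₂)).toLinearMap x = eW x := rfl
    rw [heq, Submodule.mem_prod]
    constructor
    · rintro ⟨h1, h2⟩
      rw [Submodule.mem_map] at h2
      obtain ⟨f, hf, hf2⟩ := h2
      refine ⟨h1, ?_⟩
      have : E₂ f = (eW x).2 := hf2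
      rw [← this, LinearIsometryEquiv.symm_apply_apply]
      exact hf
    · rintro ⟨h1, h2⟩
      refine ⟨h1, Submodule.mem_map.mpr ⟨E₂.symm (eW x).2, h2, ?_⟩⟩
      exact E₂.apply_symm_apply _
  have hσ : ∀ p : (H₁ × H₂) × (H₂ × H₁),
      σh p = ((WithLp.equiv 2 (H₁ × H₂)).symm (p.1.1, p.2.1),
        (WithLp.equiv 2 (H₁ × H₂)).symm (p.2.2, p.1.2)) := fun p => rfl
  have heWapp : ∀ x : W, eW x = WithLp.equiv 2 (H₁ × H₂) x := fun x => rfl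
  have hGT : (T.graph : Set (W × W)) = ⇑σh '' (GY ×ˢ GA) := by
    ext ⟨x, y⟩
    constructor
    · intro h
      rw [SetLike.mem_coe, LinearPMap.mem_graph_iff] at h
      obtain ⟨d, hd1, hd2⟩ := h
      simp only at hd1 hd2
      obtain ⟨h₁, h₂⟩ := (hdomT ↑d).mp d.2
      have happ := hTapp d (by rw [← heWapp]; exact h₁) (by rw [← heWapp]; exact h₂)
      refine ⟨(((eW ↑d).1, Y ⟨(eW ↑d).1, h₁⟩), ((eW ↑d).2,
        E₁ (Z ⟨E₂.symm (eW ↑d).2, h₂⟩))), ⟨?_, ?_⟩, ?_⟩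
      · exact Y.mem_graph ⟨(eW ↑d).1, h₁⟩
      · exact (hGA _).mpr ⟨⟨E₂.symm (eW ↑d).2, h₂⟩, E₂.apply_symm_apply _, rfl⟩
      · rw [hσ]
        simp only
        rw [← hd1, ← hd2, happ]
        refine Prod.ext ?_ ?_
        · show (WithLp.equiv 2 (H₁ × H₂)).symm ((eW ↑d).1, (eW ↑d).2) = ↑d
          rw [heWapp]
          exact (WithLp.equiv 2 (H₁ × H₂)).symm_apply_apply ↑d
        · rfl
    · rintro ⟨⟨⟨u, w₂⟩, ⟨a, w₁⟩⟩, ⟨hmemY, hmemA⟩, hσp⟩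
      rw [SetLike.mem_coe, LinearPMap.mem_graph_iff] at hmemY
      obtain ⟨uY, hu1, hu2⟩ := hmemY
      obtain ⟨f, hf1, hf2⟩ := (hGA _).mp hmemA
      simp only at hu1 hu2 hf1 hf2
      rw [hσ] at hσp
      simp only at hσp
      have hx := congrArg Prod.fst hσp
      have hy := congrArg Prod.snd hσp
      simp only at hx hy
      have hxd : x ∈ T.domain := by
        rw [hdomT x]
        constructor
        · have : eW x = (u, a) := by rw [← hx, heWapp]; exact (WithLp.equiv 2 _).apply_symm_apply _
          rw [this, ← hu1]; exact uY.2
        · have : eW x = (u, a) := by rw [← hx, heWapp]; exact (WithLp.equiv 2 _).apply_symm_apply _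
          rw [this]
          show E₂.symm a ∈ Z.domain
          rw [← hf1, LinearIsometryEquiv.symm_apply_apply]
          exact f.2
      rw [SetLike.mem_coe, LinearPMap.mem_graph_iff]
      refine ⟨⟨x, hxd⟩, rfl, ?_⟩
      have heq : WithLp.equiv 2 (H₁ × H₂) x = (u, a) := by
        rw [← hx]; exact (WithLp.equiv 2 _).apply_symm_apply _
      have h₁' : (WithLp.equiv 2 (H₁ × H₂) x).1 ∈ Y.domain := by rw [heq, ← hu1]; exact uY.2
      have h₂' : E₂.symm (WithLp.equiv 2 (H₁ × H₂) x).2 ∈ Z.domain := by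
        rw [heq]
        show E₂.symm a ∈ Z.domain
        rw [← hf1, LinearIsometryEquiv.symm_apply_apply]; exact f.2
      have happ := hTapp ⟨x, hxd⟩ h₁' h₂'
      simp only at happ
      rw [happ, ← hy]
      congr 1
      refine Prod.ext ?_ ?_
      · show E₁ (Z ⟨E₂.symm (WithLp.equiv 2 (H₁ × H₂) x).2, h₂'⟩) = w₁
        rw [← hf2]
        congr 1
        apply congrArg
        apply Subtype.ext
        show E₂.symm (WithLp.equiv 2 (H₁ × H₂) x).2 = ↑f
        rw [heq]
        show E₂.symm a = ↑f
        rw [← hf1, LinearIsometryEquiv.symm_apply_apply]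
      · show Y ⟨(WithLp.equiv 2 (H₁ × H₂) x).1, h₁'⟩ = w₂
        rw [← hu2]
        apply congrArg
        apply Subtype.ext
        show (WithLp.equiv 2 (H₁ × H₂) x).1 = ↑uY
        rw [heq, ← hu1]
  -- formal adjoint inclusions
  have hYsubA : GY ⊆ adjPairs GA := by
    rintro ⟨u, w⟩ hu
    rw [SetLike.mem_coe, LinearPMap.mem_graph_iff] at hu
    obtain ⟨ud, h1, h2⟩ := hu
    rintro ⟨a, b⟩ hab
    obtain ⟨f, hf1, hf2⟩ := (hGA _).mp hab
    simp only at h1 h2 hf1 hf2 ⊢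
    rw [← h1, ← h2, ← hf1, ← hf2, ← hE₂, ← hE₁]
    exact hYZ ud f
  have hAsubY : GA ⊆ adjPairs GY := by
    rintro ⟨a, b⟩ hab
    obtain ⟨f, hf1, hf2⟩ := (hGA _).mp hab
    rintro ⟨u, w⟩ hu
    rw [SetLike.mem_coe, LinearPMap.mem_graph_iff] at hu
    obtain ⟨ud, h1, h2⟩ := hu
    simp only at h1 h2 hf1 hf2 ⊢
    rw [← h1, ← h2, ← hf1, ← hf2]
    have hc := congrArg (starRingEnd ℂ) (hYZ ud f)
    rw [hE₂, hE₁, inner_conj_symm, inner_conj_symm] at hc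
    exact hc.symm
  -- decomposition of adjPairs of the graph of T
  have h0GY : (0 : H₁ × H₂) ∈ GY := Y.graph.zero_mem
  have h0GA : (0 : H₂ × H₁) ∈ GA := (hGA 0).mpr ⟨0, by simp, by simp⟩
  have hmemσ : ∀ (S : Set ((H₁ × H₂) × (H₂ × H₁))) (p : W × W),
      p ∈ ⇑σh '' S ↔ σh.symm p ∈ S := by
    intro S p
    constructor
    · rintro ⟨q, hq, rfl⟩; simpa using hq
    · intro h; exact ⟨σh.symm p, h, by simp⟩
  have hinner : ∀ (x y : W) (p : (H₁ × H₂) × (H₂ × H₁)),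
      (⟪y, (σh p).1⟫_ℂ = ⟪x, (σh p).2⟫_ℂ) ↔
      (⟪(eW y).1, p.1.1⟫_ℂ + ⟪(eW y).2, p.2.1⟫_ℂ
        = ⟪(eW x).1, p.2.2⟫_ℂ + ⟪(eW x).2, p.1.2⟫_ℂ) := by
    intro x y p
    rw [hσ]
    simp only [WithLp.prod_inner_apply, WithLp.equiv_symm_apply, WithLp.ofLp_toLp]
    exact Iff.rfl
  have hadjT : adjPairs (T.graph : Set (W × W)) = ⇑σh '' (adjPairs GA ×ˢ adjPairs GY) := by
    rw [hGT]
    ext ⟨x, y⟩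
    rw [hmemσ]
    have hsymm : σh.symm (x, y) = (((eW x).1, (eW y).2), ((eW x).2, (eW y).1)) := rfl
    rw [hsymm, Set.mem_prod]
    constructor
    · intro h
      have hpair : ∀ p ∈ GY, ∀ q ∈ GA,
          ⟪(eW y).1, p.1⟫_ℂ + ⟪(eW y).2, q.1⟫_ℂ
            = ⟪(eW x).1, q.2⟫_ℂ + ⟪(eW x).2, p.2⟫_ℂ := by
        intro p hp q hq
        have := h (σh (p, q)) ⟨(p, q), ⟨hp, hq⟩, rfl⟩
        exact (hinner x y (p, q)).mp this
      constructor
      · rintro ⟨a, w₁⟩ hq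
        have := hpair 0 h0GY (a, w₁) hq
        simpa using this
      · rintro ⟨u, w₂⟩ hp
        have := hpair (u, w₂) hp 0 h0GA
        simpa using this
    · rintro ⟨hA, hYm⟩ q ⟨⟨p, r⟩, ⟨hp, hr⟩, rfl⟩
      rw [show (((eW x).1, (eW y).2), ((eW x).2, (eW y).1)).1 = ((eW x).1, (eW y).2) from rfl] at hA
      refine (hinner x y (p, r)).mpr ?_
      have e1 := hYm p hp
      have e2 := hA r hr
      simp only at e1 e2
      rw [e1, e2]
      exact add_comm _ _
  -- dense domains
  have hdomA : Dense ((Z.domain.map E₂.toLinearEquiv.toLinearMap : Submodule ℂ H₂) : Set H₂) := by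
    rw [Submodule.map_coe]
    exact hZ.image_homeomorph E₂.toHomeomorph
  have hdenseT : Dense (T.domain : Set W) := by
    have hpd : Dense ((Y.domain : Set H₁) ×ˢ
        ((Z.domain.map E₂.toLinearEquiv.toLinearMap : Submodule ℂ H₂) : Set H₂)) :=
      hY.prod hdomA
    have hpre : (T.domain : Set W) = ⇑eW.toHomeomorph ⁻¹' ((Y.domain : Set H₁) ×ˢ
        ((Z.domain.map E₂.toLinearEquiv.toLinearMap : Submodule ℂ H₂) : Set H₂)) := by
      rw [hTdom]
      rfl
    rw [hpre, dense_iff_closure_eq, ← Homeomorph.preimage_closure, hpd.closure_eq,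
      Set.preimage_univ]
  -- closability
  have hYclosable : Y.IsClosable := by
    apply Y.isClosable_of_forall_zero
    intro x hx hx1
    have hx' : (x : H₁ × H₂) ∈ closure GY := by
      rw [← Submodule.topologicalClosure_coe]; exact hx
    have hmem := (closure_minimal hYsubA (isClosed_adjPairs GA)) hx'
    apply Dense.eq_zero_of_inner_left ℂ hdomA
    intro v hv
    obtain ⟨f, hf, hf2⟩ := Submodule.mem_map.mp hv
    have := hmem (v, E₁ (Z ⟨f, hf⟩)) ((hGA _).mpr ⟨⟨f, hf⟩, hf2, rfl⟩)
    simp only at this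
    rw [this, hx1, inner_zero_left]
  have hZclosable : Z.IsClosable := by
    apply Z.isClosable_of_forall_zero
    intro x hx hx1
    have hx' : (x : _ × _) ∈ closure (Z.graph : Set ((H₂ →L⋆[ℂ] ℂ) × (H₁ →L⋆[ℂ] ℂ))) := by
      rw [← Submodule.topologicalClosure_coe]; exact hx
    have hεx : ⇑ε x ∈ closure GA := by
      rw [hGAdef, ← ε.image_closure]
      exact ⟨x, hx', rfl⟩
    have hmem := (closure_minimal hAsubY (isClosed_adjPairs GY)) hεx
    have hε2 : ε x = (E₂ x.1, E₁ x.2) := rfl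
    have hE1z : E₁ x.2 = 0 := by
      apply Dense.eq_zero_of_inner_left ℂ hY
      intro v hv
      have := hmem (v, Y ⟨v, hv⟩) (Y.mem_graph ⟨v, hv⟩)
      simp only [hε2] at this
      rw [this, hx1]
      simp
    have := congrArg E₁.symm hE1z
    simpa using this
  have hTclosable : T.IsClosable := by
    apply T.isClosable_of_forall_zero
    intro x hx hx1
    have hx' : (x : W × W) ∈ closure (T.graph : Set (W × W)) := by
      rw [← Submodule.topologicalClosure_coe]; exact hx
    have hsubT : (T.graph : Set (W × W)) ⊆ adjPairs (T.graph : Set (W × W)) := by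
      rw [hadjT]
      nth_rewrite 1 [hGT]
      exact Set.image_mono (Set.prod_mono hYsubA hAsubY)
    have hmem := (closure_minimal hsubT (isClosed_adjPairs _)) hx'
    apply Dense.eq_zero_of_inner_left ℂ hdenseT
    intro v hv
    have := hmem (v, T ⟨v, hv⟩) (T.mem_graph ⟨v, hv⟩)
    simp only at this
    rw [this, hx1, inner_zero_left]
  -- closure graphs
  have hYcl : (Y.closure.graph : Set (H₁ × H₂)) = closure GY := by
    rw [← hYclosable.graph_closure_eq_closure_graph, Submodule.topologicalClosure_coe]
  have hZcl : (Z.closure.graph : Set _) = closure ((Z.graph : Set ((H₂ →L⋆[ℂ] ℂ) × (H₁ →L⋆[ℂ] ℂ)))) := by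
    rw [← hZclosable.graph_closure_eq_closure_graph, Submodule.topologicalClosure_coe]
  have hTcl : (T.closure.graph : Set (W × W)) = ⇑σh '' (closure GY ×ˢ closure GA) := by
    rw [← hTclosable.graph_closure_eq_closure_graph, Submodule.topologicalClosure_coe, hGT,
      ← closure_prod_eq, σh.image_closure]
  -- the two halves of the LHS
  have hLHS1 : (∀ (u : H₁) (w : H₂), (u, w) ∈ Y.closure.graph ↔
      ∀ f : Z.domain, (f : H₂ →L⋆[ℂ] ℂ) w = (Z f) u) ↔ closure GY = adjPairs GA := by
    have hadjGA : ∀ (u : H₁) (w : H₂),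
        ((u, w) ∈ adjPairs GA ↔ ∀ f : Z.domain, (f : H₂ →L⋆[ℂ] ℂ) w = (Z f) u) := by
      intro u w
      constructor
      · intro h f
        have := h (E₂ ↑f, E₁ (Z f)) ((hGA _).mpr ⟨f, rfl, rfl⟩)
        simp only at this
        rw [hE₂, hE₁]
        exact this
      · intro h q hq
        obtain ⟨f, hf1, hf2⟩ := (hGA _).mp hq
        rw [← hf1, ← hf2]
        show ⟪w, E₂ ↑f⟫_ℂ = ⟪u, E₁ (Z f)⟫_ℂ
        rw [← hE₂, ← hE₁]
        exact h f
    constructor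
    · intro h
      ext ⟨u, w⟩
      rw [← hYcl, SetLike.mem_coe, h u w]
      exact (hadjGA u w).symm
    · intro h u w
      rw [← SetLike.mem_coe, hYcl, h]
      exact hadjGA u w
  have hLHS2 : (∀ (f : H₂ →L⋆[ℂ] ℂ) (g : H₁ →L⋆[ℂ] ℂ), (f, g) ∈ Z.closure.graph ↔
      ∀ u : Y.domain, f (Y u) = g (u : H₁)) ↔ closure GA = adjPairs GY := by
    have hZmem : ∀ (f : H₂ →L⋆[ℂ] ℂ) (g : H₁ →L⋆[ℂ] ℂ),
        ((f, g) ∈ Z.closure.graph ↔ (E₂ f, E₁ g) ∈ closure GA) := by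
      intro f g
      rw [← SetLike.mem_coe, hZcl]
      rw [hGAdef, ← ε.image_closure]
      constructor
      · intro h
        exact ⟨(f, g), h, rfl⟩
      · rintro ⟨q, hq, hqe⟩
        have : q = (f, g) := ε.injective (by rw [hqe]; rfl)
        rwa [← this]
    have hadjGY : ∀ (f : H₂ →L⋆[ℂ] ℂ) (g : H₁ →L⋆[ℂ] ℂ),
        ((E₂ f, E₁ g) ∈ adjPairs GY ↔ ∀ u : Y.domain, f (Y u) = g (u : H₁)) := by
      intro f g
      constructor
      · intro h u
        have := h (↑u, Y u) (Y.mem_graph u)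
        simp only at this
        have h2 := congrArg (starRingEnd ℂ) this
        rw [inner_conj_symm, inner_conj_symm] at h2
        rw [hE₂, hE₁]
        exact h2.symm
      · intro h q hq
        obtain ⟨ud, h1, h2⟩ := Y.mem_graph_iff.mp hq
        rw [← h1, ← h2]
        show ⟪E₁ g, (ud : H₁)⟫_ℂ = ⟪E₂ f, Y ud⟫_ℂ
        have hc := congrArg (starRingEnd ℂ) (h ud)
        rw [hE₂, hE₁, inner_conj_symm, inner_conj_symm] at hc
        exact hc.symm
    constructor
    · intro h
      ext ⟨a, b⟩
      have h1 := hZmem (E₂.symm a) (E₁.symm b)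
      rw [E₂.apply_symm_apply, E₁.apply_symm_apply] at h1
      have h2 := hadjGY (E₂.symm a) (E₁.symm b)
      rw [E₂.apply_symm_apply, E₁.apply_symm_apply] at h2
      exact (h1.symm.trans ((h (E₂.symm a) (E₁.symm b)).trans h2.symm))
    · intro h f g
      rw [hZmem f g, h]
      exact hadjGY f g
  -- the RHS
  have hadjcl : ((T.closure†).graph : Set (W × W)) = ⇑σh '' (adjPairs GA ×ˢ adjPairs GY) := by
    rw [graph_adjoint_eq (hdenseT.mono (T.le_closure).1),
      ← hTclosable.graph_closure_eq_closure_graph, Submodule.topologicalClosure_coe,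
      adjPairs_closure, hadjT]
  have hRHS : IsSelfAdjoint T.closure ↔
      (adjPairs GA ×ˢ adjPairs GY : Set ((H₁ × H₂) × (H₂ × H₁))) =
        closure GY ×ˢ closure GA := by
    rw [LinearPMap.isSelfAdjoint_def]
    constructor
    · intro h
      have hgr : ((T.closure†).graph : Set (W × W)) = (T.closure.graph : Set (W × W)) := by
        rw [h]
      rw [hadjcl, hTcl] at hgr
      exact (Set.image_eq_image σh.injective).mp hgr
    · intro h
      apply LinearPMap.eq_of_eq_graph
      apply SetLike.coe_injective
      rw [hadjcl, hTcl, h]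
  rw [hLHS1, hLHS2, hRHS]
  constructor
  · rintro ⟨h1, h2⟩
    rw [h1, h2]
  · intro h
    have hne : ((adjPairs GA ×ˢ adjPairs GY : Set ((H₁ × H₂) × (H₂ × H₁)))).Nonempty :=
      ⟨(0, 0), Set.mk_mem_prod (zero_mem_adjPairs GA) (zero_mem_adjPairs GY)⟩
    obtain ⟨h1, h2⟩ := (Set.prod_eq_prod_iff_of_nonempty hne).mp h
    exact ⟨h1.symm, h2.symm⟩
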